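/- Let n ≥ 3 be an integer and c a nonzero complex number. If G is a meromorphic function on ℂ, not identically zero, satisfying c·G(z)^n = ((G'/G)'(z))^{2n−1} as meromorphic functions, then G has neither zeros nor poles in ℂ. -/

import Mathlib

open MeasureTheory Filter

noncomputable section

/-- The positive part `log⁺` of the logarithm. -/
def logPlus (x : ℝ) : ℝ := max (Real.log x) 0

/-- The Nevanlinna proximity function `m(r,f)`. -/
def nevProx (f : ℂ → ℂ) (r : ℝ) : ℝ :=
  (2 * Real.pi)⁻¹ *
    ∫ θ in (0:ℝ)..(2 * Real.pi), logPlus ‖f ((r : ℂ) * Complex.exp ((θ : ℂ) * Complex.I))‖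

open scoped Classical in
/-- The order of the pole of `f` at `z` (zero if `f` is not meromorphic at `z` or
has no pole there). -/
def poleOrder (f : ℂ → ℂ) (z : ℂ) : ℕ :=
  if h : MeromorphicAt f z then (-((meromorphicOrderAt f z).untopD 0)).toNat else 0

/-- The unintegrated pole-counting function `n(t,f)` (poles counted with multiplicity). -/
def poleCount (f : ℂ → ℂ) (t : ℝ) : ℝ :=
  (∑' z : ℂ, if ‖z‖ ≤ t then (poleOrder f z : ENNReal) else 0).toReal

/-- The integrated Nevanlinna counting function `N(r,f)`. -/
def nevCount (f : ℂ → ℂ) (r : ℝ) : ℝ :=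
  poleCount f 0 * Real.log r + ∫ t in (0:ℝ)..r, (poleCount f t - poleCount f 0) / t

/-- The Nevanlinna characteristic function `T(r,f) = m(r,f) + N(r,f)`. -/
def nevChar (f : ℂ → ℂ) (r : ℝ) : ℝ := nevProx f r + nevCount f r

/-- A set `E ⊆ ℝ` has finite logarithmic measure: `∫_{E ∩ [1,∞)} dt/t < ∞`. -/
def FiniteLogMeasure (E : Set ℝ) : Prop :=
  (∫⁻ t in E ∩ Set.Ici 1, ENNReal.ofReal (1 / t)) < ⊤

/-- `S = o(T)` as `r → ∞` outside a possible exceptional set of finite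
logarithmic measure; this is the meaning of `S(r) = S(r,f)` when `T = T(r,f)`. -/
def SmallO (S T : ℝ → ℝ) : Prop :=
  ∃ E : Set ℝ, FiniteLogMeasure E ∧
    ∀ ε : ℝ, 0 < ε → ∃ R : ℝ, ∀ r : ℝ, R ≤ r → r ∉ E → |S r| ≤ ε * |T r|

/-- `g` is a small (meromorphic) function of `f`, i.e. `T(r,g) = S(r,f)`. -/
def SmallFunc (g f : ℂ → ℂ) : Prop :=
  MeromorphicOn g Set.univ ∧ SmallO (nevChar g) (nevChar f)

/-- The hyper-order `ρ₂(f) = limsup log⁺ log⁺ T(r,f) / log r`. -/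
def hyperOrder (f : ℂ → ℂ) : EReal :=
  Filter.limsup (fun r : ℝ => ((logPlus (logPlus (nevChar f r)) / Real.log r : ℝ) : EReal))
    Filter.atTop

/-- The order `ρ(f) = limsup log⁺ T(r,f) / log r`. -/
def growthOrder (f : ℂ → ℂ) : EReal :=
  Filter.limsup (fun r : ℝ => ((logPlus (nevChar f r) / Real.log r : ℝ) : EReal)) Filter.atTop

/-- A locally finite subset of `ℂ` (finite in every compact set). -/
def LocFinite (S : Set ℂ) : Prop := ∀ K : Set ℂ, IsCompact K → (S ∩ K).Finite

/-- Equality of meromorphic functions: `F` and `G` agree off a locally finite set. -/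
def MeroEq (F G : ℂ → ℂ) : Prop :=
  ∃ S : Set ℂ, LocFinite S ∧ ∀ z ∉ S, F z = G z

/-- A meromorphic function is transcendental if it is not a rational function. -/
def TranscendentalMero (f : ℂ → ℂ) : Prop :=
  ¬ ∃ p q : Polynomial ℂ, q ≠ 0 ∧ MeroEq f (fun z => p.eval z / q.eval z)

/-- One monomial of a differential-difference polynomial: a coefficient together with a
list of factors `(ν, c, k)`, a factor representing `(f^{(ν)}(z+c))^k`. -/
structure DDTerm where
  coeff : ℂ → ℂ
  factors : List (ℕ × ℂ × ℕ)

/-- The total degree of a monomial: the sum of the exponents of its factors. -/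
def DDTerm.degree (t : DDTerm) : ℕ := (t.factors.map fun p => p.2.2).sum

/-- Evaluation of a monomial on `f` at `z`. -/
def DDTerm.eval (t : DDTerm) (f : ℂ → ℂ) (z : ℂ) : ℂ :=
  t.coeff z * (t.factors.map fun p => (iteratedDeriv p.1 f (z + p.2.1)) ^ p.2.2).prod

/-- A differential-difference polynomial: a finite (formal) sum of monomials. -/
structure DDPoly where
  terms : List DDTerm

/-- The degree of a differential-difference polynomial: the maximal total degree
of its monomials. -/
def DDPoly.degree (P : DDPoly) : ℕ := (P.terms.map DDTerm.degree).foldr max 0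

/-- Evaluation of a differential-difference polynomial on `f` at `z`. -/
def DDPoly.eval (P : DDPoly) (f : ℂ → ℂ) (z : ℂ) : ℂ :=
  (P.terms.map fun t => t.eval f z).sum

/-- A difference polynomial is a differential-difference polynomial involving
no derivatives. -/
def DDPoly.IsDifference (P : DDPoly) : Prop :=
  ∀ t ∈ P.terms, ∀ p ∈ t.factors, p.1 = 0

open Filter Topology in
private lemma analyticAt_deriv' {f : ℂ → ℂ} {x : ℂ} (hf : AnalyticAt ℂ f x) :
    AnalyticAt ℂ (deriv f) x := by
  obtain ⟨U, hU, hUo, hxU⟩ := eventually_nhds_iff.mp hf.eventually_analyticAt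
  exact (AnalyticOnNhd.deriv (fun y hy => hU y hy)) x hxU

open Filter Topology in
private lemma meroEq_eventuallyEq {F G : ℂ → ℂ} (h : MeroEq F G) (z : ℂ) :
    F =ᶠ[𝓝[≠] z] G := by
  obtain ⟨S, hS, hFG⟩ := h
  have hfin : ((S ∩ Metric.closedBall z 1) \ {z}).Finite :=
    (hS _ (isCompact_closedBall z 1)).diff
  have hopen : IsOpen ((S ∩ Metric.closedBall z 1) \ {z})ᶜ := hfin.isClosed.isOpen_compl
  have hz : z ∈ ((S ∩ Metric.closedBall z 1) \ {z})ᶜ := by simp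
  have hmem : ((S ∩ Metric.closedBall z 1) \ {z})ᶜ ∩ Metric.ball z 1 ∈ 𝓝 z :=
    Filter.inter_mem (hopen.mem_nhds hz) (Metric.ball_mem_nhds z one_pos)
  filter_upwards [nhdsWithin_le_nhds hmem, self_mem_nhdsWithin] with w hw hw'
  apply hFG
  intro hwS
  exact hw.1 ⟨⟨hwS, Metric.ball_subset_closedBall hw.2⟩, hw'⟩

open Filter Topology in
private lemma meroEq_zero_of_order_top {G : ℂ → ℂ} (hG : MeromorphicOn G Set.univ)
    {z₀ : ℂ} (h : meromorphicOrderAt G z₀ = ⊤) : MeroEq G (fun _ => 0) := by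
  set A : Set ℂ := {z | meromorphicOrderAt G z = ⊤} with hA
  have hAopen : IsOpen A := by
    rw [isOpen_iff_mem_nhds]
    intro z hz
    have h1 := meromorphicOrderAt_eq_top_iff.mp hz
    rw [eventually_nhdsWithin_iff, eventually_nhds_iff] at h1
    obtain ⟨U, hU, hUo, hzU⟩ := h1
    apply Filter.mem_of_superset (hUo.mem_nhds hzU)
    intro w hw
    rcases eq_or_ne w z with rfl | hwz
    · exact hz
    · rw [hA, Set.mem_setOf_eq, meromorphicOrderAt_eq_top_iff]
      have hmem : U ∩ {z}ᶜ ∈ 𝓝 w :=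
        Filter.inter_mem (hUo.mem_nhds hw) (isOpen_compl_singleton.mem_nhds hwz)
      apply Filter.Eventually.filter_mono nhdsWithin_le_nhds
      filter_upwards [hmem] with v hv
      exact hU v hv.1 hv.2
  have hAcl : IsClosed A := by
    rw [← isOpen_compl_iff, isOpen_iff_mem_nhds]
    intro z hz
    simp only [hA, Set.mem_compl_iff, Set.mem_setOf_eq] at hz
    obtain ⟨m, hm⟩ := WithTop.ne_top_iff_exists.mp hz
    obtain ⟨g, hg_an, hg_ne, hg_eq⟩ :=
      (meromorphicOrderAt_eq_int_iff (hG z (Set.mem_univ z)) (n := m)).mp hm.symm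
    have hgne : ∀ᶠ w in 𝓝 z, g w ≠ 0 := hg_an.continuousAt.eventually_ne hg_ne
    rw [eventually_nhdsWithin_iff] at hg_eq
    obtain ⟨U, hU, hUo, hzU⟩ := eventually_nhds_iff.mp (hg_eq.and hgne)
    apply Filter.mem_of_superset (hUo.mem_nhds hzU)
    intro w hw
    simp only [Set.mem_compl_iff, hA, Set.mem_setOf_eq]
    rcases eq_or_ne w z with rfl | hwz
    · rw [← hm]; exact WithTop.coe_ne_top
    · rw [meromorphicOrderAt_eq_top_iff]
      intro hev
      have hne : ∀ᶠ v in 𝓝[≠] w, G v ≠ 0 := by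
        have hmem : U ∩ {z}ᶜ ∈ 𝓝 w :=
          Filter.inter_mem (hUo.mem_nhds hw) (isOpen_compl_singleton.mem_nhds hwz)
        apply Filter.Eventually.filter_mono nhdsWithin_le_nhds
        filter_upwards [hmem] with v hv
        have h2 := hU v hv.1
        rw [h2.1 hv.2, smul_eq_mul]
        exact mul_ne_zero (zpow_ne_zero _ (sub_ne_zero.mpr hv.2)) h2.2
      obtain ⟨v, hv1, hv2⟩ := (hev.and hne).exists
      exact hv2 hv1
  have hAuniv : A = Set.univ := IsClopen.eq_univ ⟨hAcl, hAopen⟩ ⟨z₀, h⟩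
  refine ⟨{z | G z ≠ 0}, ?_, fun z hz => not_not.mp hz⟩
  intro K hK
  by_contra hinf
  rw [← Set.not_infinite, not_not] at hinf
  obtain ⟨x, -, hacc⟩ :=
    hinf.exists_accPt_of_subset_isCompact hK Set.inter_subset_right
  rw [accPt_iff_frequently] at hacc
  have hx : meromorphicOrderAt G x = ⊤ := by
    have : x ∈ A := hAuniv ▸ Set.mem_univ x
    exact this
  have hev := meromorphicOrderAt_eq_top_iff.mp hx
  rw [eventually_nhdsWithin_iff] at hev
  obtain ⟨v, hv1, hv2⟩ := (hacc.and_eventually hev).exists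
  exact hv1.2.1 (hv2 hv1.1)

open Filter Topology in
private lemma key_order {G : ℂ → ℂ} {z₀ : ℂ} {m : ℤ} (hm : m ≠ 0) {g : ℂ → ℂ}
    (hg : AnalyticAt ℂ g z₀) (hgne : g z₀ ≠ 0)
    (hGg : ∀ᶠ z in 𝓝[≠] z₀, G z = (z - z₀) ^ m * g z) :
    ∃ h : ℂ → ℂ, AnalyticAt ℂ h z₀ ∧ h z₀ ≠ 0 ∧
      ∀ᶠ z in 𝓝[≠] z₀, deriv (fun w => deriv G w / G w) z = (z - z₀) ^ (-2 : ℤ) * h z := by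
  set q : ℂ → ℂ := fun w => deriv g w / g w with hq
  have hq_an : AnalyticAt ℂ q z₀ := (analyticAt_deriv' hg).div hg hgne
  set h : ℂ → ℂ := fun z => -(m : ℂ) + (z - z₀) ^ 2 * deriv q z with hh
  have hh_an : AnalyticAt ℂ h z₀ :=
    analyticAt_const.add
      (((analyticAt_id.sub analyticAt_const).pow 2).mul (analyticAt_deriv' hq_an))
  have hh_ne : h z₀ ≠ 0 := by
    have hz : h z₀ = -(m : ℂ) := by simp [hh]
    rw [hz]
    exact neg_ne_zero.mpr (Int.cast_ne_zero.mpr hm)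
  rw [eventually_nhdsWithin_iff] at hGg
  have hgs : ∀ᶠ w in 𝓝 z₀, AnalyticAt ℂ g w := hg.eventually_analyticAt
  have hgn : ∀ᶠ w in 𝓝 z₀, g w ≠ 0 := hg.continuousAt.eventually_ne hgne
  have hqs : ∀ᶠ w in 𝓝 z₀, AnalyticAt ℂ q w := hq_an.eventually_analyticAt
  obtain ⟨U, hU, hUo, hzU⟩ :=
    eventually_nhds_iff.mp (hGg.and (hgs.and (hgn.and hqs)))
  have claim1 : ∀ w ∈ U, w ≠ z₀ →
      deriv G w / G w = (m : ℂ) * (w - z₀) ^ (-1 : ℤ) + q w := by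
    intro w hw hwz
    have hsub : w - z₀ ≠ 0 := sub_ne_zero.mpr hwz
    have hVmem : U ∩ {z₀}ᶜ ∈ 𝓝 w :=
      Filter.inter_mem (hUo.mem_nhds hw) (isOpen_compl_singleton.mem_nhds hwz)
    have hGeq : G =ᶠ[𝓝 w] fun z => (z - z₀) ^ m * g z := by
      filter_upwards [hVmem] with v hv
      exact (hU v hv.1).1 hv.2
    have hd1 : HasDerivAt (fun z : ℂ => (z - z₀) ^ m) ((m : ℂ) * (w - z₀) ^ (m - 1)) w := by
      have := (hasDerivAt_zpow m (w - z₀) (Or.inl hsub)).comp w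
        ((hasDerivAt_id w).sub_const z₀)
      simpa [Function.comp_def] using this
    have hd2 : HasDerivAt g (deriv g w) w := ((hU w hw).2.1.differentiableAt).hasDerivAt
    have hd3 := hd1.mul hd2
    have hderG : deriv G w = (m : ℂ) * (w - z₀) ^ (m - 1) * g w + (w - z₀) ^ m * deriv g w := by
      rw [hGeq.deriv_eq]; exact hd3.deriv
    have hGw' : G w = (w - z₀) ^ m * g w := (hU w hw).1 hwz
    have hgw : g w ≠ 0 := (hU w hw).2.2.1
    have h1 : (w - z₀) ^ m ≠ 0 := zpow_ne_zero _ hsub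
    show _ = (m : ℂ) * (w - z₀) ^ (-1 : ℤ) + deriv g w / g w
    rw [hderG, hGw', zpow_sub_one₀ hsub, zpow_neg_one]
    field_simp
  have claim2 : ∀ w ∈ U, w ≠ z₀ →
      deriv (fun z => deriv G z / G z) w = (w - z₀) ^ (-2 : ℤ) * h w := by
    intro w hw hwz
    have hsub : w - z₀ ≠ 0 := sub_ne_zero.mpr hwz
    have hVmem : U ∩ {z₀}ᶜ ∈ 𝓝 w :=
      Filter.inter_mem (hUo.mem_nhds hw) (isOpen_compl_singleton.mem_nhds hwz)
    have hLeq : (fun z => deriv G z / G z) =ᶠ[𝓝 w]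
        fun z => (m : ℂ) * (z - z₀) ^ (-1 : ℤ) + q z := by
      filter_upwards [hVmem] with v hv
      exact claim1 v hv.1 hv.2
    have h0 : HasDerivAt (fun z : ℂ => (z - z₀) ^ (-1 : ℤ))
        (-((w - z₀) ^ (-2 : ℤ))) w := by
      have h0'' := (hasDerivAt_zpow (-1) (w - z₀) (Or.inl hsub)).comp w
        ((hasDerivAt_id w).sub_const z₀)
      simpa [Function.comp_def, show ((-1 : ℤ) - 1) = -2 by norm_num] using h0''
    have hd1 : HasDerivAt (fun z : ℂ => (m : ℂ) * (z - z₀) ^ (-1 : ℤ))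
        ((m : ℂ) * -((w - z₀) ^ (-2 : ℤ))) w := h0.const_mul _
    have hd2 : HasDerivAt q (deriv q w) w := ((hU w hw).2.2.2.differentiableAt).hasDerivAt
    have hd3 := hd1.add hd2
    have hval : deriv (fun z => deriv G z / G z) w
        = (m : ℂ) * -((w - z₀) ^ (-2 : ℤ)) + deriv q w := by
      rw [hLeq.deriv_eq]; exact hd3.deriv
    have e : (w - z₀) ^ (-2 : ℤ) * (w - z₀) ^ (2 : ℕ) = 1 := by
      rw [← zpow_natCast (w - z₀) 2, ← zpow_add₀ hsub]; norm_num
    rw [hval]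
    have : h w = -(m : ℂ) + (w - z₀) ^ 2 * deriv q w := rfl
    rw [this]
    calc (m : ℂ) * -((w - z₀) ^ (-2 : ℤ)) + deriv q w
        = -(m : ℂ) * (w - z₀) ^ (-2 : ℤ)
            + ((w - z₀) ^ (-2 : ℤ) * (w - z₀) ^ (2 : ℕ)) * deriv q w := by rw [e]; ring
      _ = (w - z₀) ^ (-2 : ℤ) * (-(m : ℂ) + (w - z₀) ^ 2 * deriv q w) := by ring
  refine ⟨h, hh_an, hh_ne, ?_⟩
  rw [eventually_nhdsWithin_iff]
  exact eventually_nhds_iff.mpr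
    ⟨U, fun w hw hwne => claim2 w hw hwne, hUo, hzU⟩

open Filter Topology in
/-- the zero/pole analysis of `G` in Subcase 2.1 of Theorem 1.1. -/
theorem no_zeros_or_poles_of_logderiv_power_equation
    (n : ℕ) (hn : 3 ≤ n) (c : ℂ) (hc : c ≠ 0)
    (G : ℂ → ℂ) (hG : MeromorphicOn G Set.univ)
    (hGne : ¬ MeroEq G (fun _ => 0))
    (heq : MeroEq (fun z => c * G z ^ n)
      (fun z => (deriv (fun w => deriv G w / G w) z) ^ (2 * n - 1))) :
    ∀ z : ℂ, meromorphicOrderAt G z = 0 := by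
  intro z₀
  by_contra hne0
  have hmero := hG z₀ (Set.mem_univ z₀)
  rcases eq_or_ne (meromorphicOrderAt G z₀) ⊤ with htop | htop
  · exact hGne (meroEq_zero_of_order_top hG htop)
  obtain ⟨m, hm⟩ := WithTop.ne_top_iff_exists.mp htop
  have hmne : m ≠ 0 := by
    rintro rfl
    exact hne0 (by rw [← hm]; norm_num)
  obtain ⟨g, hg, hgne, hGg⟩ := (meromorphicOrderAt_eq_int_iff hmero (n := m)).mp hm.symm
  simp only [smul_eq_mul] at hGg
  obtain ⟨h, hh, hhne, hder⟩ := key_order hmne hg hgne hGg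
  have hL : ∀ᶠ z in 𝓝[≠] z₀,
      c * G z ^ n = (z - z₀) ^ (m * (n : ℤ)) * (c * g z ^ n) := by
    filter_upwards [hGg] with z hz
    rw [hz, mul_pow, ← zpow_natCast ((z - z₀) ^ m) n, ← zpow_mul]
    ring
  have hR : ∀ᶠ z in 𝓝[≠] z₀,
      (deriv (fun w => deriv G w / G w) z) ^ (2 * n - 1)
        = (z - z₀) ^ ((-2 : ℤ) * ((2 * n - 1 : ℕ) : ℤ)) * h z ^ (2 * n - 1) := by
    filter_upwards [hder] with z hz
    rw [hz, mul_pow, ← zpow_natCast ((z - z₀) ^ (-2 : ℤ)) (2 * n - 1), ← zpow_mul]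
  have huniq : m * (n : ℤ) = (-2 : ℤ) * ((2 * n - 1 : ℕ) : ℤ) := by
    apply AnalyticAt.unique_eventuallyEq_zpow_smul_nonzero
      (f := fun z => c * G z ^ n) (z₀ := z₀)
    · refine ⟨fun z => c * g z ^ n, analyticAt_const.mul (hg.pow n),
        mul_ne_zero hc (pow_ne_zero n hgne), ?_⟩
      filter_upwards [hL] with z hz
      rw [smul_eq_mul]; exact hz
    · refine ⟨fun z => h z ^ (2 * n - 1), hh.pow _, pow_ne_zero _ hhne, ?_⟩
      have hE := meroEq_eventuallyEq heq z₀
      filter_upwards [hE, hR] with z h1 h2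
      rw [smul_eq_mul]
      calc c * G z ^ n = (deriv (fun w => deriv G w / G w) z) ^ (2 * n - 1) := h1
        _ = _ := h2
  have hcast : ((2 * n - 1 : ℕ) : ℤ) = 2 * (n : ℤ) - 1 := by
    have h1 : 1 ≤ 2 * n := by omega
    push_cast [h1]
    ring
  rw [hcast] at huniq
  have hn3 : (3 : ℤ) ≤ (n : ℤ) := by exact_mod_cast hn
  have h2 : ((m : ℤ) + 4) * (n : ℤ) = 2 := by linear_combination huniq
  have hdvd : (n : ℤ) ∣ 2 := ⟨m + 4, by linarith⟩
  have := Int.le_of_dvd (by norm_num) hdvd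
  omega

end
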